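/- Consider the continuous Petri net with places p1, p2 and transitions t1, t2 where W(p1,t1)=1, W(t1,p2)=1, W(p2,t2)=2, W(t2,p1)=1, and initial marking m0(p1)=1, m0(p2)=0. Then the empty marking (0,0) is not reachable by any finite firing sequence, but it is reachable in the limit of an infinite firing sequence. -/
import Mathlib


open Relation Filter

/-! ### Boolean networks and their semantics -/

abbrev Config (n : ℕ) := Fin n → Bool
abbrev BN (n : ℕ) := Config n → Fin n → Bool

def Delta {n : ℕ} (x y : Config n) : Set (Fin n) := {i | x i ≠ y i}

def fa {n : ℕ} (f : BN n) (x y : Config n) : Prop :=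
  ∃ i, Delta x y = {i} ∧ f x i = y i

def syn {n : ℕ} (f : BN n) (x y : Config n) : Prop := ∀ i, f x i = y i

def ga {n : ℕ} (f : BN n) (x y : Config n) : Prop := ∀ i ∈ Delta x y, f x i = y i

/-! ### Most permissive semantics -/

inductive MPV where
  | b : Bool → MPV
  | up : MPV
  | down : MPV
deriving DecidableEq

abbrev MPConfig (n : ℕ) := Fin n → MPV

def toMP {n : ℕ} (x : Config n) : MPConfig n := fun i => .b (x i)

def beta {n : ℕ} (xh : MPConfig n) : Set (Config n) :=
  {x | ∀ i v, xh i = .b v → x i = v}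

def mpStep {n : ℕ} (f : BN n) (xh yh : MPConfig n) : Prop :=
  ∃ i, (∀ j, j ≠ i → xh j = yh j) ∧ xh i ≠ yh i ∧
    ((xh i = .up ∧ yh i = .b true) ∨
     (xh i = .down ∧ yh i = .b false) ∨
     (xh i ≠ .b true ∧ yh i = .up ∧ ∃ x ∈ beta xh, f x i = true) ∨
     (xh i ≠ .b false ∧ yh i = .down ∧ ∃ x ∈ beta xh, f x i = false))

def mp {n : ℕ} (f : BN n) (x y : Config n) : Prop :=
  ReflTransGen (mpStep f) (toMP x) (toMP y)

/-! ### Petri nets (discrete and continuous) -/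

structure Net (P T : Type) where
  wPT : P → T → ℕ
  wTP : T → P → ℕ

def dfire {P T : Type} (N : Net P T) (t : T) (M M' : P → ℕ) : Prop :=
  (∀ p, N.wPT p t ≤ M p) ∧ ∀ p, M' p = M p - N.wPT p t + N.wTP t p

def dReach {P T : Type} (N : Net P T) : (P → ℕ) → (P → ℕ) → Prop :=
  ReflTransGen (fun M M' => ∃ t, dfire N t M M')

def cfire {P T : Type} (N : Net P T) (t : T) (α : ℝ) (m m' : P → ℝ) : Prop :=
  0 ≤ α ∧ (∀ p, α * N.wPT p t ≤ m p) ∧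
    ∀ p, m' p = m p - α * N.wPT p t + α * N.wTP t p

def cReach {P T : Type} (N : Net P T) : (P → ℝ) → (P → ℝ) → Prop :=
  ReflTransGen (fun m m' => ∃ t α, cfire N t α m m')

def limReach {P T : Type} (N : Net P T) (m m' : P → ℝ) : Prop :=
  ∃ ms : ℕ → P → ℝ, ms 0 = m ∧
    (∀ k, ∃ t α, cfire N t α (ms k) (ms (k+1))) ∧
    Tendsto ms atTop (nhds m')

def IsTrap {P T : Type} (N : Net P T) (S : Set P) : Prop :=
  ∀ t, (∃ p ∈ S, 0 < N.wPT p t) → ∃ p ∈ S, 0 < N.wTP t p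

def enabPos {P T : Type} (N : Net P T) (t : T) (m : P → ℝ) : Prop :=
  ∀ p, 0 < N.wPT p t → 0 < m p

def enabGe {P T : Type} (N : Net P T) (t : T) (m : P → ℝ) (c : ℝ) : Prop :=
  ∀ p, 0 < N.wPT p t → c * N.wPT p t ≤ m p

/-! ### Petri net encoding of Boolean networks -/

abbrev Clause (n : ℕ) := Fin n → Option Bool

def satC {n : ℕ} (z : Config n) (C : Clause n) : Prop :=
  ∀ j v, C j = some v → z j = v

structure ETrans (n : ℕ) where
  i : Fin n
  s : Bool
  C : Clause n

abbrev EPlace (n : ℕ) := Fin n × Bool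

def encNet (n : ℕ) : Net (EPlace n) (ETrans n) where
  wPT := fun p t =>
    if p.1 = t.i then (if p.2 = !t.s then 1 else 0)
    else (if t.C p.1 = some p.2 then 1 else 0)
  wTP := fun t p =>
    if p.1 = t.i then (if p.2 = t.s then 1 else 0)
    else (if t.C p.1 = some p.2 then 1 else 0)

def mu {n : ℕ} (xh : MPConfig n) : Set (EPlace n → ℝ) :=
  {m | (∀ p, 0 ≤ m p) ∧ ∀ i,
    m (i, false) + m (i, true) = 1 ∧
    (∀ v, xh i = .b v → m (i, v) = 1) ∧
    ((xh i = .up ∨ xh i = .down) →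
      0 < m (i, false) ∧ m (i, false) < 1 ∧ 0 < m (i, true) ∧ m (i, true) < 1)}

noncomputable def canon {n : ℕ} (xh : MPConfig n) : EPlace n → ℝ := fun p =>
  match xh p.1 with
  | .b v => if p.2 = v then 1 else 0
  | _ => 1/2

def validT {n : ℕ} (D : Fin n → Bool → Set (Clause n)) (t : ETrans n) : Prop :=
  t.C ∈ D t.i t.s

def IsDNF {n : ℕ} (f : BN n) (D : Fin n → Bool → Set (Clause n)) : Prop :=
  (∀ i s z, (∃ C ∈ D i s, satC z C) ↔ (z i = !s ∧ f z i = s)) ∧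
  (∀ i s C, C ∈ D i s → C i = some (!s))

def cReachG {P T : Type} (N : Net P T) (good : T → Prop) :
    (P → ℝ) → (P → ℝ) → Prop :=
  ReflTransGen (fun m m' => ∃ t, good t ∧ ∃ α, cfire N t α m m')

def climReachG {P T : Type} (N : Net P T) (good : T → Prop) (m m' : P → ℝ) : Prop :=
  ∃ ms : ℕ → P → ℝ, ms 0 = m ∧
    (∀ k, ∃ t, good t ∧ ∃ α, cfire N t α (ms k) (ms (k+1))) ∧
    Tendsto ms atTop (nhds m')

/-- The concrete running-example net: W(p1,t1)=1, W(t1,p2)=1, W(p2,t2)=2,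
W(t2,p1)=1, all other weights 0.  Place `0` is p1, place `1` is p2,
transition `0` is t1 and transition `1` is t2. -/
def exampleNet : Net (Fin 2) (Fin 2) where
  wPT := fun p t =>
    if p = 0 ∧ t = 0 then 1 else if p = 1 ∧ t = 1 then 2 else 0
  wTP := fun t p =>
    if t = 0 ∧ p = 1 then 1 else if t = 1 ∧ p = 0 then 1 else 0

def NetInv (m : Fin 2 → ℝ) : Prop := 0 ≤ m 0 ∧ 0 ≤ m 1 ∧ 0 < m 0 + m 1

lemma inv_step {m m' : Fin 2 → ℝ} (h : ∃ t α, cfire exampleNet t α m m')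
    (hm : NetInv m) : NetInv m' := by
  obtain ⟨t, α, hα, hub, heq⟩ := h
  obtain ⟨h0, h1, hs⟩ := hm
  fin_cases t
  · have e0 := heq 0
    have e1 := heq 1
    have u0 := hub 0
    simp [exampleNet] at e0 e1 u0
    refine ⟨by rw [e0]; linarith, by rw [e1]; linarith, by rw [e0, e1]; linarith⟩
  · have e0 := heq 0
    have e1 := heq 1
    have u1 := hub 1
    simp [exampleNet] at e0 e1 u1
    refine ⟨by rw [e0]; linarith, by rw [e1]; linarith, by rw [e0, e1]; linarith⟩

lemma inv_reach {m m' : Fin 2 → ℝ} (h : cReach exampleNet m m') (hm : NetInv m) :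
    NetInv m' := by
  induction h with
  | refl => exact hm
  | tail _ step ih => exact inv_step step ih

noncomputable def msSeq : ℕ → Fin 2 → ℝ := fun k p =>
  if k % 2 = 0 then (if p = 0 then (1/2:ℝ)^(k/2) else 0)
  else (if p = 1 then (1/2:ℝ)^(k/2) else 0)

/-- from the initial marking (1,0) the empty marking is not
reachable by any finite firing sequence, but it is lim-reachable. -/
theorem empty_marking_lim_reachable_only :
    ¬ cReach exampleNet ![(1:ℝ), 0] (fun _ => (0:ℝ)) ∧
      limReach exampleNet ![(1:ℝ), 0] (fun _ => (0:ℝ)) := by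
  constructor
  · intro h
    have hinv : NetInv ![(1:ℝ), 0] := by
      constructor
      · norm_num
      constructor
      · norm_num
      · norm_num
    have := inv_reach h hinv
    obtain ⟨_, _, hs⟩ := this
    simp at hs
  · refine ⟨msSeq, ?_, ?_, ?_⟩
    · funext p
      fin_cases p <;> simp [msSeq]
    · intro k
      rcases Nat.even_or_odd k with ⟨j, hj⟩ | ⟨j, hj⟩
      · -- even: fire t1 with α = (1/2)^j
        refine ⟨0, (1/2:ℝ)^(k/2), by positivity, ?_, ?_⟩
        · intro p
          have h1 : k % 2 = 0 := by omega
          fin_cases p <;> simp [exampleNet, msSeq, h1]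
        · intro p
          have h1 : k % 2 = 0 := by omega
          have h2 : (k+1) % 2 = 1 := by omega
          have h3 : (k+1) / 2 = k / 2 := by omega
          fin_cases p <;> simp [exampleNet, msSeq, h1, h2, h3]
      · -- odd: fire t2 with α = (1/2)^(k/2) / 2
        refine ⟨1, (1/2:ℝ)^(k/2) / 2, by positivity, ?_, ?_⟩
        · intro p
          have h1 : k % 2 = 1 := by omega
          fin_cases p <;> simp [exampleNet, msSeq, h1] <;> linarith
        · intro p
          have h1 : k % 2 = 1 := by omega
          have h2 : (k+1) % 2 = 0 := by omega
          have h3 : (k+1) / 2 = k / 2 + 1 := by omega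
          fin_cases p <;> simp [exampleNet, msSeq, h1, h2, h3] <;> ring
    · rw [tendsto_pi_nhds]
      intro p
      have hb : Tendsto (fun k : ℕ => (1/2:ℝ)^(k/2)) atTop (nhds 0) := by
        have hdiv : Tendsto (fun k : ℕ => k / 2) atTop atTop :=
          tendsto_atTop_atTop.2 fun b => ⟨2*b, fun a ha => by omega⟩
        exact (tendsto_pow_atTop_nhds_zero_of_lt_one (by norm_num) (by norm_num)).comp hdiv
      refine squeeze_zero (fun k => ?_) (fun k => ?_) hb
      · unfold msSeq; split <;> split <;> positivity
      · unfold msSeq; split <;> split <;> first | exact le_refl _ | positivity
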